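/- For any two linear orders σ and τ over m alternatives, the total distance moved by any combination of selection/insertion sort operations, i.e. the weighted sum ∑_{ℓ=1}^{m−1} ℓ · f^{σ→τ}(ℓ), equals the Kendall's Tau distance d_kt(σ, τ). -/

import Mathlib

/-- One step of a selection/insertion sorting algorithm at step index `k`
(0-indexed), transforming the current list `l` towards target ranking `τ`.
If `s = true` a selection-sort step is performed (promote the `τ`-most
preferred alternative of the suffix); if `s = false` an insertion-sort step
is performed (promote the alternative currently at position `k`). In both
cases the picked alternative is promoted so that the top `k+1` alternatives
are in `τ`-order. The second component is the number of positions by which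
the alternative was moved up. -/
def ddStep {α : Type*} [DecidableEq α] (τ l : List α) (k : ℕ) (s : Bool) :
    List α × ℕ :=
  match (if s then τ.filter (fun b => decide (b ∈ l.drop k)) else l.drop k).head? with
  | none => (l, 0)
  | some a =>
      let pre := l.take k
      let p := (pre.filter (fun b => decide (τ.idxOf b < τ.idxOf a))).length
      (pre.take p ++ a :: (pre.drop p ++ (l.drop k).erase a), l.idxOf a - p)

/-- The list maintained by the sorting algorithm `s : ℕ → Bool`
(`true` = SEL, `false` = INS) after `k` steps, starting from `σ` with
target `τ`. -/
def ddRun {α : Type*} [DecidableEq α] (τ : List α) (s : ℕ → Bool) (σ : List α) :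
    ℕ → List α
  | 0 => σ
  | k + 1 => (ddStep τ (ddRun τ s σ k) k (s k)).1

/-- The count function `f^{σ→τ}_𝒜(ℓ)`: the number of drag-and-drop operations
that move an alternative up by exactly `ℓ` positions during the execution of
the sorting algorithm `s` transforming `σ` into `τ`. -/
def countF {α : Type*} [DecidableEq α] (τ σ : List α) (s : ℕ → Bool) (ℓ : ℕ) : ℕ :=
  ((Finset.range τ.length).filter
    (fun k => 0 < ℓ ∧ (ddStep τ (ddRun τ s σ k) k (s k)).2 = ℓ)).card

/-- Kendall's Tau distance between two rankings given as lists: the number of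
ordered pairs `(a, b)` ranked `a` above `b` by `σ` but `b` above `a` by `τ`. -/
def kendall {α : Type*} [DecidableEq α] (σ τ : List α) : ℕ :=
  ((σ.toFinset ×ˢ σ.toFinset).filter
    (fun p => σ.idxOf p.1 < σ.idxOf p.2 ∧ τ.idxOf p.2 < τ.idxOf p.1)).card

section Aux

open List

variable {α : Type*} [DecidableEq α]

/-- inversion count of `l` w.r.t. the key `τ.idxOf`. -/
def invc (τ : List α) : List α → ℕ
  | [] => 0
  | b :: t => t.countP (fun c => decide (τ.idxOf c < τ.idxOf b)) + invc τ t

/-- cross-inversions between `X` (before) and `M` (after). -/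
def cross (τ : List α) (X M : List α) : ℕ :=
  (X.map (fun b => M.countP (fun c => decide (τ.idxOf c < τ.idxOf b)))).sum

lemma cross_append_left (τ X Y M : List α) :
    cross τ (X ++ Y) M = cross τ X M + cross τ Y M := by
  simp [cross]

lemma cross_append_right (τ X M N : List α) :
    cross τ X (M ++ N) = cross τ X M + cross τ X N := by
  induction X with
  | nil => rfl
  | cons b t ih =>
      simp only [cross, map_cons, sum_cons, countP_append] at ih ⊢
      omega

lemma invc_append (τ : List α) (X M : List α) :
    invc τ (X ++ M) = invc τ X + cross τ X M + invc τ M := by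
  induction X with
  | nil => simp [invc, cross]
  | cons b t ih =>
      simp only [cons_append, invc, List.append_eq, ih, countP_append, cross, map_cons,
        sum_cons]
      omega

lemma cross_singleton_left (τ : List α) (a : α) (M : List α) :
    cross τ [a] M = M.countP (fun c => decide (τ.idxOf c < τ.idxOf a)) := by
  simp [cross]

lemma cross_singleton_right (τ : List α) (X : List α) (a : α) :
    cross τ X [a] = X.countP (fun b => decide (τ.idxOf a < τ.idxOf b)) := by
  induction X with
  | nil => rfl
  | cons b t ih =>
      simp only [cross, map_cons, sum_cons] at ih ⊢
      rw [ih, countP_cons]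
      simp only [countP_cons, countP_nil]
      by_cases h : τ.idxOf a < τ.idxOf b <;> [skip; skip] <;> simp [h] <;> omega

/-- moving `a` backwards past `Y` (all `τ`-greater) removes `Y.length` inversions. -/
lemma invc_move (τ : List α) (X Y Z : List α) (a : α)
    (h : ∀ y ∈ Y, τ.idxOf a < τ.idxOf y) :
    invc τ (X ++ a :: (Y ++ Z)) + Y.length = invc τ (X ++ Y ++ (a :: Z)) := by
  have h1 : cross τ [a] Y = 0 := by
    rw [cross_singleton_left, countP_eq_zero]
    intro c hc; simpa using Nat.not_lt.2 (Nat.le_of_lt (h c hc))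
  have h2 : cross τ Y [a] = Y.length := by
    rw [cross_singleton_right]
    rw [countP_eq_length]
    intro c hc; simpa using h c hc
  have e1 : X ++ a :: (Y ++ Z) = X ++ ([a] ++ (Y ++ Z)) := by simp
  have e2 : X ++ Y ++ (a :: Z) = X ++ (Y ++ ([a] ++ Z)) := by simp
  rw [e1, e2]
  simp only [invc_append, cross_append_right, cross_append_left, h1, h2]
  simp [invc]
  omega

lemma invc_sorted_eq_zero (τ : List α) {l : List α}
    (h : l.Pairwise (fun x y => τ.idxOf x < τ.idxOf y)) : invc τ l = 0 := by
  induction l with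
  | nil => rfl
  | cons b t ih =>
      rw [pairwise_cons] at h
      simp only [invc, ih h.2, Nat.add_zero]
      rw [countP_eq_zero]
      intro c hc
      simpa using Nat.not_lt.2 (Nat.le_of_lt (h.1 c hc))

lemma ite_sum_countP (p : α → Prop) [DecidablePred p] (t : List α) :
    (t.map fun y => if p y then (1:ℕ) else 0).sum = t.countP (fun y => decide (p y)) := by
  induction t with
  | nil => rfl
  | cons b t ih => by_cases h : p b <;> simp [countP_cons, h, ih, Nat.add_comm]

lemma kendall_sum (σ τ : List α) : kendall σ τ =
    ∑ x ∈ σ.toFinset, ∑ y ∈ σ.toFinset,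
      if σ.idxOf x < σ.idxOf y ∧ τ.idxOf y < τ.idxOf x then 1 else 0 := by
  rw [kendall, Finset.card_filter, Finset.sum_product]

lemma kendall_cons (τ : List α) (b : α) (t : List α) (hb : b ∉ t) (ht : t.Nodup) :
    kendall (b :: t) τ =
      t.countP (fun c => decide (τ.idxOf c < τ.idxOf b)) + kendall t τ := by
  have hbT : b ∉ t.toFinset := by simpa using hb
  have idxne : ∀ x ∈ t.toFinset, (b :: t).idxOf x = (t.idxOf x).succ := by
    intro x hx
    exact idxOf_cons_ne t (fun e => hb (e ▸ (List.mem_toFinset.1 hx)))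
  rw [kendall_sum, kendall_sum, toFinset_cons, Finset.sum_insert hbT]
  have term1 : ∑ y ∈ insert b t.toFinset,
      (if (b :: t).idxOf b < (b :: t).idxOf y ∧ τ.idxOf y < τ.idxOf b then (1:ℕ) else 0)
      = t.countP (fun c => decide (τ.idxOf c < τ.idxOf b)) := by
    rw [Finset.sum_insert hbT, idxOf_cons_self]
    have h0 : (if (0:ℕ) < 0 ∧ τ.idxOf b < τ.idxOf b then (1:ℕ) else 0) = 0 := by simp
    rw [h0, Nat.zero_add]
    rw [Finset.sum_congr rfl (fun y hy => by
      rw [idxne y hy]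
      simp [Nat.succ_pos] : ∀ y ∈ t.toFinset,
        (if (0:ℕ) < (b :: t).idxOf y ∧ τ.idxOf y < τ.idxOf b then (1:ℕ) else 0)
        = if τ.idxOf y < τ.idxOf b then (1:ℕ) else 0)]
    rw [List.sum_toFinset _ ht, ite_sum_countP]
  have term2 : ∀ x ∈ t.toFinset, ∑ y ∈ insert b t.toFinset,
      (if (b :: t).idxOf x < (b :: t).idxOf y ∧ τ.idxOf y < τ.idxOf x then (1:ℕ) else 0)
      = ∑ y ∈ t.toFinset,
      (if t.idxOf x < t.idxOf y ∧ τ.idxOf y < τ.idxOf x then (1:ℕ) else 0) := by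
    intro x hx
    rw [Finset.sum_insert hbT, idxOf_cons_self, idxne x hx]
    have h0 : (if (t.idxOf x).succ < 0 ∧ τ.idxOf b < τ.idxOf x then (1:ℕ) else 0) = 0 := by
      simp
    rw [h0, Nat.zero_add]
    exact Finset.sum_congr rfl (fun y hy => by rw [idxne y hy]; simp [Nat.succ_lt_succ_iff])
  rw [term1, Finset.sum_congr rfl term2]

lemma kendall_eq_invc (τ : List α) : ∀ (l : List α), l.Nodup → kendall l τ = invc τ l
  | [], _ => by simp [kendall, invc]
  | b :: t, h => by
      obtain ⟨hb, ht⟩ := List.nodup_cons.1 h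
      rw [kendall_cons τ b t hb ht, invc, kendall_eq_invc τ t ht]

lemma pairwise_idxOf {τ : List α} (hτ : τ.Nodup) :
    τ.Pairwise (fun x y => τ.idxOf x < τ.idxOf y) := by
  rw [pairwise_iff_getElem]
  intro i j hi hj hij
  rw [hτ.idxOf_getElem i hi, hτ.idxOf_getElem j hj]
  exact hij

lemma take_drop_countP {P : α → Bool} (key : α → ℕ)
    (mono : ∀ x y, key x < key y → P y = true → P x = true) :
    ∀ {L : List α}, L.Pairwise (fun x y => key x < key y) →
      (∀ z ∈ L.take (L.countP P), P z = true) ∧ (∀ z ∈ L.drop (L.countP P), ¬ P z = true)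
  | [], _ => by simp
  | b :: t, h => by
      obtain ⟨hb, ht⟩ := pairwise_cons.1 h
      obtain ⟨ih1, ih2⟩ := take_drop_countP key mono ht
      by_cases hPb : P b = true
      · rw [countP_cons_of_pos hPb]
        constructor
        · intro z hz
          rw [List.take_succ_cons] at hz
          rcases mem_cons.1 hz with rfl | hz
          · exact hPb
          · exact ih1 z hz
        · intro z hz
          rw [List.drop_succ_cons] at hz
          exact ih2 z hz
      · have ht0 : t.countP P = 0 :=
          countP_eq_zero.2 (fun y hy hPy => hPb (mono b y (hb y hy) hPy))
        rw [countP_cons_of_neg hPb, ht0]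
        refine ⟨by simp, ?_⟩
        intro z hz
        rw [List.drop_zero] at hz
        rcases mem_cons.1 hz with rfl | hz
        · exact hPb
        · exact fun hPz => hPb (mono b z (hb z hz) hPz)

/-- The heart of the argument: one promotion step. -/
lemma step_core (τ : List α) (hτ : τ.Nodup) (l : List α) (k : ℕ)
    (hl : l.Nodup) (hsub : ∀ x ∈ l, x ∈ τ)
    (hsort : (l.take k).Pairwise fun x y => τ.idxOf x < τ.idxOf y)
    (hk : k ≤ l.length)
    (a : α) (W Z : List α) (hWZ : l.drop k = W ++ a :: Z)
    (hW : ∀ w ∈ W, τ.idxOf a < τ.idxOf w) :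
    ((l.take k).take (((l.take k).filter
        (fun c => decide (τ.idxOf c < τ.idxOf a))).length)
      ++ a :: ((l.take k).drop (((l.take k).filter
        (fun c => decide (τ.idxOf c < τ.idxOf a))).length) ++ (l.drop k).erase a)).Perm l ∧
    (((l.take k).take (((l.take k).filter
        (fun c => decide (τ.idxOf c < τ.idxOf a))).length)
      ++ a :: ((l.take k).drop (((l.take k).filter
        (fun c => decide (τ.idxOf c < τ.idxOf a))).length)
        ++ (l.drop k).erase a)).take (k+1)).Pairwise
      (fun x y => τ.idxOf x < τ.idxOf y) ∧
    invc τ ((l.take k).take (((l.take k).filter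
        (fun c => decide (τ.idxOf c < τ.idxOf a))).length)
      ++ a :: ((l.take k).drop (((l.take k).filter
        (fun c => decide (τ.idxOf c < τ.idxOf a))).length) ++ (l.drop k).erase a))
      + (l.idxOf a - ((l.take k).filter
        (fun c => decide (τ.idxOf c < τ.idxOf a))).length) = invc τ l ∧
    l.idxOf a - ((l.take k).filter
        (fun c => decide (τ.idxOf c < τ.idxOf a))).length < l.length := by
  set P : α → Bool := fun c => decide (τ.idxOf c < τ.idxOf a) with hP
  set pre := l.take k with hpre
  set p := (pre.filter P).length with hp
  have hpcount : p = pre.countP P := countP_eq_length_filter.symm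
  set X := pre.take p with hX
  set Y₁ := pre.drop p with hY₁
  have hpreXY : pre = X ++ Y₁ := (take_append_drop p pre).symm
  have hprelen : pre.length = k := by
    rw [hpre, length_take]; omega
  have hple : p ≤ pre.length := by
    rw [hp]; exact length_filter_le _ _
  have hXlen : X.length = p := by rw [hX, length_take]; omega
  have hY₁len : Y₁.length = k - p := by rw [hY₁, length_drop]; omega
  have hmempre : ∀ x ∈ pre, x ∈ l := fun x hx => (take_subset k l) hx
  have hmemdrop : ∀ x ∈ l.drop k, x ∈ l := fun x hx => (drop_subset k l) hx
  have hal : a ∈ l := hmemdrop a (by rw [hWZ]; simp)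
  have hnd : (pre ++ l.drop k).Nodup := by rw [hpre, take_append_drop]; exact hl
  have hanotpre : a ∉ pre := by
    intro hapre
    have := (List.nodup_append.1 hnd).2.2
    exact this a hapre a (by rw [hWZ]; simp) rfl
  have hdropnd : (l.drop k).Nodup := (List.nodup_append.1 hnd).2.1
  have hanotW : a ∉ W := by
    rw [hWZ] at hdropnd
    have := (List.nodup_append.1 hdropnd).2.2
    intro haW; exact this a haW a mem_cons_self rfl
  have hmono : ∀ x y : α, τ.idxOf x < τ.idxOf y → P y = true → P x = true := by
    intro x y hxy hy
    rw [hP] at hy ⊢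
    simp only [decide_eq_true_eq] at hy ⊢
    omega
  obtain ⟨htake, hdrop⟩ := take_drop_countP (fun x => τ.idxOf x) hmono hsort
  rw [← hpcount] at htake hdrop
  have hXlt : ∀ x ∈ X, τ.idxOf x < τ.idxOf a := by
    intro x hx
    simpa [hP] using htake x hx
  have hY₁gt : ∀ y ∈ Y₁, τ.idxOf a < τ.idxOf y := by
    intro y hy
    have h1 : ¬ τ.idxOf y < τ.idxOf a := by
      simpa [hP] using hdrop y hy
    have h2 : τ.idxOf y ≠ τ.idxOf a := by
      intro he
      have hyl : y ∈ pre := (drop_subset p pre) hy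
      have : y = a := (idxOf_inj (hsub y (hmempre y hyl))).1 he
      exact hanotpre (this ▸ hyl)
    omega
  set Y := Y₁ ++ W with hYdef
  have hYgt : ∀ y ∈ Y, τ.idxOf a < τ.idxOf y := by
    intro y hy
    rcases mem_append.1 hy with hy | hy
    · exact hY₁gt y hy
    · exact hW y hy
  have hdecomp : l = X ++ Y ++ (a :: Z) := by
    conv_lhs => rw [← take_append_drop k l]
    rw [← hpre, hWZ, hpreXY, hYdef]
    simp [append_assoc]
  have herase : (l.drop k).erase a = W ++ Z := by
    rw [hWZ, erase_append_right _ hanotW, erase_cons_head]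
  have hidx : l.idxOf a = p + Y.length := by
    conv_lhs => rw [hdecomp]
    rw [idxOf_append_of_notMem, idxOf_cons_self, Nat.add_zero, length_append, hXlen]
    intro hmem
    rcases mem_append.1 hmem with h | h
    · exact hanotpre (hpreXY ▸ mem_append.2 (Or.inl h))
    · rcases mem_append.1 h with h | h
      · exact hanotpre (hpreXY ▸ mem_append.2 (Or.inr h))
      · exact hanotW h
  have hd : l.idxOf a - p = Y.length := by omega
  have hform : X ++ a :: (Y₁ ++ (l.drop k).erase a) = X ++ a :: (Y ++ Z) := by
    rw [herase, hYdef, append_assoc]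
  refine ⟨?_, ?_, ?_, ?_⟩
  · rw [hform, hdecomp, append_assoc X Y (a :: Z)]
    exact Perm.append_left X perm_middle.symm
  · have htke : (X ++ a :: (Y₁ ++ (l.drop k).erase a)).take (k+1) = X ++ a :: Y₁ := by
      rw [take_append]
      have h1 : k + 1 - X.length = (k - p) + 1 := by omega
      rw [h1, take_of_length_le (by omega), take_succ_cons, take_left' hY₁len]
    rw [htke]
    have hpreSorted := hsort
    rw [hpreXY] at hpreSorted
    obtain ⟨pX, pY₁, pcross⟩ := pairwise_append.1 hpreSorted
    refine pairwise_append.2 ⟨pX, pairwise_cons.2 ⟨hY₁gt, pY₁⟩, ?_⟩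
    intro x hx y hy
    rcases mem_cons.1 hy with rfl | hy
    · exact hXlt x hx
    · exact pcross x hx y hy
  · rw [hform, hd, hdecomp]
    exact invc_move τ X Y Z a hYgt
  · have : l.idxOf a < l.length := idxOf_lt_length_iff.2 hal
    omega

lemma ddStep_eq' (τ l : List α) (k : ℕ) (s : Bool) (a : α)
    (h : (if s then τ.filter (fun b => decide (b ∈ l.drop k)) else l.drop k).head? = some a) :
    ddStep τ l k s =
      ((l.take k).take (((l.take k).filter
          (fun c => decide (τ.idxOf c < τ.idxOf a))).length)
        ++ a :: ((l.take k).drop (((l.take k).filter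
          (fun c => decide (τ.idxOf c < τ.idxOf a))).length) ++ (l.drop k).erase a),
       l.idxOf a - ((l.take k).filter
          (fun c => decide (τ.idxOf c < τ.idxOf a))).length) := by
  unfold ddStep
  rw [h]

lemma step_main (τ : List α) (hτ : τ.Nodup) (l : List α) (k : ℕ) (b : Bool)
    (hperm : l.Perm τ)
    (hsort : (l.take k).Pairwise fun x y => τ.idxOf x < τ.idxOf y)
    (hk : k < l.length) :
    (ddStep τ l k b).1.Perm τ ∧
    ((ddStep τ l k b).1.take (k+1)).Pairwise (fun x y => τ.idxOf x < τ.idxOf y) ∧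
    invc τ (ddStep τ l k b).1 + (ddStep τ l k b).2 = invc τ l ∧
    (ddStep τ l k b).2 < l.length := by
  have hl : l.Nodup := hperm.nodup_iff.2 hτ
  have hsub : ∀ x ∈ l, x ∈ τ := fun x hx => hperm.subset hx
  have hdropne : l.drop k ≠ [] := by
    apply ne_nil_of_length_pos
    rw [length_drop]; omega
  obtain ⟨a, ha, W, Z, hWZ, hW⟩ :
      ∃ a, (if b then τ.filter (fun c => decide (c ∈ l.drop k)) else l.drop k).head? = some a ∧
        ∃ W Z, l.drop k = W ++ a :: Z ∧ ∀ w ∈ W, τ.idxOf a < τ.idxOf w := by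
    cases b with
    | false =>
        obtain ⟨a, t, he⟩ := exists_cons_of_ne_nil hdropne
        exact ⟨a, by simp [he], [], t, by simp [he], by simp⟩
    | true =>
        set F := τ.filter (fun c => decide (c ∈ l.drop k)) with hF
        have hFne : F ≠ [] := by
          obtain ⟨x, t, he⟩ := exists_cons_of_ne_nil hdropne
          have hxl : x ∈ l.drop k := by rw [he]; exact mem_cons_self
          have hxF : x ∈ F := mem_filter.2 ⟨hsub x ((drop_subset k l) hxl), by simpa using hxl⟩
          exact ne_nil_of_mem hxF
        obtain ⟨a, Ft, hFe⟩ := exists_cons_of_ne_nil hFne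
        have haF : a ∈ F := hFe ▸ mem_cons_self
        have hamem : a ∈ l.drop k := by simpa using (mem_filter.1 haF).2
        obtain ⟨W, Z, hWZ⟩ := append_of_mem hamem
        refine ⟨a, by simp [← hF, hFe], W, Z, hWZ, ?_⟩
        intro w hw
        have hwdrop : w ∈ l.drop k := by rw [hWZ]; exact mem_append.2 (Or.inl hw)
        have hwF : w ∈ F := mem_filter.2 ⟨hsub w ((drop_subset k l) hwdrop),
          by simpa using hwdrop⟩
        have hwa : w ≠ a := by
          have hnd : (l.drop k).Nodup := (drop_sublist k l).nodup hl
          rw [hWZ] at hnd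
          intro he
          exact (List.nodup_append.1 hnd).2.2 w hw w (he ▸ mem_cons_self (a := a) (l := Z)) rfl
        have hFsorted : F.Pairwise (fun x y => τ.idxOf x < τ.idxOf y) :=
          Pairwise.sublist filter_sublist (pairwise_idxOf hτ)
        rw [hFe, pairwise_cons] at hFsorted
        have hwFt : w ∈ Ft := by
          rcases mem_cons.1 (hFe ▸ hwF) with he | h
          · exact absurd he hwa
          · exact h
        exact hFsorted.1 w hwFt
  rw [ddStep_eq' τ l k b a ha]
  obtain ⟨h1, h2, h3, h4⟩ := step_core τ hτ l k hl hsub hsort (le_of_lt hk) a W Z hWZ hW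
  exact ⟨h1.trans hperm, h2, h3, h4⟩

lemma run_inv (τ : List α) (hτ : τ.Nodup) (σ : List α) (hperm : σ.Perm τ) (s : ℕ → Bool) :
    ∀ k, k ≤ σ.length →
      (ddRun τ s σ k).Perm τ ∧
      ((ddRun τ s σ k).take k).Pairwise (fun x y => τ.idxOf x < τ.idxOf y) ∧
      invc τ (ddRun τ s σ k) +
        ∑ j ∈ Finset.range k, (ddStep τ (ddRun τ s σ j) j (s j)).2 = invc τ σ
  | 0, _ => ⟨hperm, by simp [ddRun], by simp [ddRun]⟩
  | k + 1, hk => by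
      obtain ⟨h1, h2, h3⟩ := run_inv τ hτ σ hperm s k (by omega)
      have hlen : (ddRun τ s σ k).length = σ.length :=
        h1.length_eq.trans hperm.length_eq.symm
      have hklen : k < (ddRun τ s σ k).length := by omega
      obtain ⟨g1, g2, g3, _⟩ := step_main τ hτ (ddRun τ s σ k) k (s k) h1 h2 hklen
      refine ⟨g1, g2, ?_⟩
      show invc τ (ddStep τ (ddRun τ s σ k) k (s k)).1 + _ = _
      rw [Finset.sum_range_succ]
      omega

end Aux

/-- For any two linear orders `σ`, `τ` over `m` alternatives
and any interleaving `s` of selection/insertion sort steps, the total distance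
moved, `∑_{ℓ=1}^{m-1} ℓ · f^{σ→τ}(ℓ)`, equals the Kendall's Tau distance
`d_kt(σ, τ)`. -/
theorem total_distance_eq_kendall {α : Type*} [DecidableEq α]
    (m : ℕ) (σ τ : List α) (hσ : σ.Nodup) (hτ : τ.Nodup) (hperm : σ.Perm τ)
    (hm : σ.length = m) (s : ℕ → Bool) :
    ∑ ℓ ∈ Finset.Icc 1 (m - 1), ℓ * countF τ σ s ℓ = kendall σ τ := by
  subst hm
  set m := σ.length with hm
  have hτlen : τ.length = m := hperm.length_eq.symm
  obtain ⟨h1, h2, h3⟩ := run_inv τ hτ σ hperm s m le_rfl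
  have hlenm : (ddRun τ s σ m).length = m := h1.length_eq.trans hperm.length_eq.symm
  have htakeall : (ddRun τ s σ m).take m = ddRun τ s σ m :=
    List.take_of_length_le (le_of_eq hlenm)
  rw [htakeall] at h2
  have hinv0 : invc τ (ddRun τ s σ m) = 0 := invc_sorted_eq_zero τ h2
  have hsum : ∑ j ∈ Finset.range m, (ddStep τ (ddRun τ s σ j) j (s j)).2 = invc τ σ := by
    rw [hinv0, Nat.zero_add] at h3
    exact h3
  have hdlt : ∀ j < m, (ddStep τ (ddRun τ s σ j) j (s j)).2 < m := by
    intro j hj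
    obtain ⟨g1, g2, _⟩ := run_inv τ hτ σ hperm s j (le_of_lt hj)
    have hlenj : (ddRun τ s σ j).length = m := g1.length_eq.trans hperm.length_eq.symm
    have := (step_main τ hτ (ddRun τ s σ j) j (s j) g1 g2 (by omega)).2.2.2
    omega
  have hLHS : ∑ ℓ ∈ Finset.Icc 1 (m - 1), ℓ * countF τ σ s ℓ
      = ∑ k ∈ Finset.range m, (ddStep τ (ddRun τ s σ k) k (s k)).2 := by
    have expand : ∀ ℓ : ℕ, ℓ * countF τ σ s ℓ
        = ∑ k ∈ Finset.range m,
            (if 0 < ℓ ∧ (ddStep τ (ddRun τ s σ k) k (s k)).2 = ℓ then ℓ else 0) := by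
      intro ℓ
      rw [countF, hτlen, Finset.card_filter, Finset.mul_sum]
      refine Finset.sum_congr rfl (fun k _ => ?_)
      by_cases h : 0 < ℓ ∧ (ddStep τ (ddRun τ s σ k) k (s k)).2 = ℓ <;> simp [h]
    rw [Finset.sum_congr rfl (fun ℓ _ => expand ℓ), Finset.sum_comm]
    refine Finset.sum_congr rfl (fun k hk => ?_)
    by_cases h0 : (ddStep τ (ddRun τ s σ k) k (s k)).2 = 0
    · rw [Finset.sum_eq_zero]
      · exact h0.symm
      intro ℓ hℓ
      rw [if_neg]
      rintro ⟨hpos, he⟩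
      omega
    · have hdk : (ddStep τ (ddRun τ s σ k) k (s k)).2 ∈ Finset.Icc 1 (m - 1) := by
        rw [Finset.mem_range] at hk
        have := hdlt k hk
        rw [Finset.mem_Icc]; omega
      rw [Finset.sum_eq_single_of_mem _ hdk]
      · rw [if_pos ⟨by omega, rfl⟩]
      intro ℓ hℓ hne
      rw [if_neg]
      rintro ⟨hpos, he⟩
      exact hne he.symm
  rw [hLHS, hsum, kendall_eq_invc τ σ hσ]
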